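/- Let Y ∈ F_q^{N×(n+m)} with rank Y = N, and write Y = [Â | y] with Â ∈ F_q^{N×n} and y ∈ F_q^{N×m}. Set μ = n − rank Â and δ = N − rank Â. Then there exist a matrix r ∈ F_q^{n×m}, a matrix L̂ ∈ F_q^{n×μ}, a matrix Ê ∈ F_q^{δ×m}, and a subset U ⊆ {1,…,n} such that: (i) |U| = μ; (ii) I_U^T r = 0; (iii) I_U^T L̂ = −I_{μ×μ}; (iv) rank Ê = δ; and (v) the row space of the (n+δ)×(n+m) block matrix [[I_n + L̂ I_U^T , r],[0 , Ê]] equals the row space of Y. -/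

import Mathlib

open Matrix

/-- The row space of a matrix: the span of its rows. -/
noncomputable def rowSpace {F : Type*} [Field F] {ι κ : Type*}
    (M : Matrix ι κ F) : Submodule F (κ → F) :=
  Submodule.span F (Set.range fun i => M i)

/-- `I_U`: the `n × μ` matrix whose columns are the columns of the `n × n`
identity matrix indexed by the set `U` (in increasing order). -/
def unitColumns (F : Type*) [Field F] {n μ : ℕ}
    (U : Finset (Fin n)) (hU : U.card = μ) : Matrix (Fin n) (Fin μ) F :=
  Matrix.of fun i k => if i = U.orderEmbOfFin hU k then 1 else 0

set_option maxHeartbeats 1000000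
set_option synthInstance.maxHeartbeats 400000

/-- existence of a reduction of a full-rank received matrix
`Y = [Ahat | y]`. -/
theorem reduction_existence
    {F : Type*} [Field F] [Fintype F] {N n m : ℕ} {μ δ : ℕ}
    (Y : Matrix (Fin N) (Fin n ⊕ Fin m) F) (hrank : Y.rank = N)
    (Ahat : Matrix (Fin N) (Fin n) F) (y : Matrix (Fin N) (Fin m) F)
    (hY : Y = Matrix.fromCols Ahat y)
    (hμ : μ = n - Ahat.rank) (hδ : δ = N - Ahat.rank) :
    ∃ (r : Matrix (Fin n) (Fin m) F) (L : Matrix (Fin n) (Fin μ) F)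
      (E : Matrix (Fin δ) (Fin m) F) (U : Finset (Fin n)) (hU : U.card = μ),
      (unitColumns F U hU)ᵀ * r = 0 ∧
      (unitColumns F U hU)ᵀ * L = -1 ∧
      E.rank = δ ∧
      rowSpace (Matrix.fromBlocks
          (1 + L * (unitColumns F U hU)ᵀ) r 0 E) = rowSpace Y := by
  classical
  set π : ((Fin n ⊕ Fin m) → F) →ₗ[F] (Fin n → F) := LinearMap.funLeft F F Sum.inl with hπdef
  set ψ : ((Fin n ⊕ Fin m) → F) →ₗ[F] (Fin m → F) := LinearMap.funLeft F F Sum.inr with hψdef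
  set V : Submodule F ((Fin n ⊕ Fin m) → F) := rowSpace Y with hVdef
  have hπrow : ∀ i, π (Y i) = Ahat i := by
    intro i; funext j
    simp [hπdef, LinearMap.funLeft_apply, hY, Matrix.fromCols]
  have hP : V.map π = rowSpace Ahat := by
    rw [hVdef, rowSpace, rowSpace, Submodule.map_span, ← Set.range_comp]
    congr 1
    exact congrArg Set.range (funext hπrow)
  have hfV : Module.finrank F V = N := by
    rw [hVdef, rowSpace]; exact (Matrix.rank_eq_finrank_span_row Y).symm.trans hrank
  have hfP : Module.finrank F (V.map π) = Ahat.rank := by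
    rw [hP, rowSpace]; exact (Matrix.rank_eq_finrank_span_row Ahat).symm
  set W : Submodule F ((Fin n ⊕ Fin m) → F) := V ⊓ LinearMap.ker π with hWdef
  have hfW : Module.finrank F W = δ := by
    have h1 := LinearMap.finrank_range_add_finrank_ker (π.domRestrict V)
    rw [LinearMap.range_domRestrict, LinearMap.ker_domRestrict, hfV, hfP] at h1
    have h2 : Submodule.comap V.subtype (LinearMap.ker π)
        = Submodule.comap V.subtype W := by
      rw [hWdef, Submodule.comap_inf, Submodule.comap_subtype_self, top_inf_eq]
    rw [h2, (Submodule.comapSubtypeEquivOfLe (inf_le_left : W ≤ V)).finrank_eq] at h1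
    rw [← hWdef] at h1
    omega
  set P : Submodule F (Fin n → F) := V.map π with hPdef
  set g : Fin n → ((Fin n → F) ⧸ P) := fun i => P.mkQ (Pi.single i (1:F)) with hgdef
  have hesp : Submodule.span F (Set.range fun i : Fin n => Pi.single i (1:F)) = ⊤ := by
    rw [eq_top_iff]
    intro x _
    have hx : x = ∑ i : Fin n, x i • (Pi.single i 1 : Fin n → F) := by
      funext j
      rw [Finset.sum_apply]
      simp [Pi.single_apply]
    rw [hx]
    exact Submodule.sum_mem _ fun i _ => Submodule.smul_mem _ _ (Submodule.subset_span ⟨i, rfl⟩)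
  have hgspan : Submodule.span F (Set.range g) = ⊤ := by
    have h0 : Set.range g = P.mkQ '' Set.range (fun i : Fin n => Pi.single i (1:F)) := by
      rw [← Set.range_comp]; rfl
    rw [h0, ← Submodule.map_span, hesp, Submodule.map_top, Submodule.range_mkQ]
  obtain ⟨b, hbsub, hbspan, hbli⟩ := exists_linearIndependent F (Set.range g)
  rw [hgspan] at hbspan
  haveI : Fintype b := ((Set.finite_range g).subset hbsub).fintype
  have hfQ : Fintype.card b = μ := by
    have hbas : Module.Basis b F ((Fin n → F) ⧸ P) :=
      Module.Basis.mk hbli (by rw [Subtype.range_coe]; exact hbspan.ge)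
    have h3 := Module.finrank_eq_card_basis hbas
    have h4 := Submodule.finrank_quotient_add_finrank P
    rw [Module.finrank_fin_fun, hfP] at h4
    omega
  set pick : b → Fin n := fun x => (hbsub x.2).choose with hpickdef
  have hgpick : ∀ x : b, g (pick x) = x := fun x => (hbsub x.2).choose_spec
  have hpickinj : Function.Injective pick := by
    intro x y hxy
    apply Subtype.ext
    rw [← hgpick x, ← hgpick y, hxy]
  set U : Finset (Fin n) := Finset.univ.image pick with hUdef
  have hU : U.card = μ := by
    rw [hUdef, Finset.card_image_of_injective _ hpickinj, Finset.card_univ, hfQ]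
  have hgUb : ∀ i ∈ U, g i ∈ b := by
    intro i hi
    rw [hUdef, Finset.mem_image] at hi
    obtain ⟨x, -, rfl⟩ := hi
    rw [hgpick]; exact x.2
  set SU : Submodule F (Fin n → F) :=
    Submodule.span F ((fun u : Fin n => (Pi.single u 1 : Fin n → F)) '' ↑U) with hSUdef
  have hSUtop : P ⊔ SU = ⊤ := by
    rw [← Submodule.map_mkQ_eq_top, hSUdef, Submodule.map_span, ← Set.image_comp]
    have himg : (P.mkQ ∘ fun u : Fin n => (Pi.single u 1 : Fin n → F)) '' ↑U = b := by
      ext z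
      constructor
      · rintro ⟨u, hu, rfl⟩
        exact hgUb u hu
      · intro hz
        refine ⟨pick ⟨z, hz⟩, ?_, ?_⟩
        · rw [hUdef]; exact Finset.mem_coe.mpr (Finset.mem_image_of_mem _ (Finset.mem_univ _))
        · exact hgpick ⟨z, hz⟩
    rw [himg, hbspan]
  have hSU0 : ∀ c ∈ SU, ∀ j, j ∉ U → c j = 0 := by
    intro c hc
    refine Submodule.span_induction ?_ ?_ ?_ ?_ hc
    · rintro _ ⟨u, hu, rfl⟩ j hj
      have hne : j ≠ u := fun h => hj (h ▸ hu)
      simp [Pi.single_apply, hne]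
    · intro j _; rfl
    · intro a c' _ _ ha hc' j hj
      simp only [Pi.add_apply, ha j hj, hc' j hj, add_zero]
    · intro t a _ ha j hj
      simp only [Pi.smul_apply, ha j hj, smul_zero]
  have hInd : ∀ p ∈ P, (∀ j, j ∉ U → p j = 0) → p = 0 := by
    intro p hp hp0
    have hrep : p = ∑ u ∈ U, p u • (Pi.single u 1 : Fin n → F) := by
      funext j
      rw [Finset.sum_apply]
      have hsum : ∑ u ∈ U, (p u • (Pi.single u 1 : Fin n → F)) j
          = if j ∈ U then p j else 0 := by
        rw [← Finset.sum_ite_eq U j (fun u => p u)]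
        apply Finset.sum_congr rfl
        intro u _
        by_cases h : j = u <;> simp [Pi.single_apply, h]
      rw [hsum]
      by_cases hj : j ∈ U
      · simp [hj]
      · simp [hj, hp0 j hj]
    have hq0 : ∑ u ∈ U, p u • g u = 0 := by
      have hm : P.mkQ p = 0 := (Submodule.Quotient.mk_eq_zero P).mpr hp
      have hm2 : P.mkQ p = ∑ u ∈ U, p u • g u := by
        conv_lhs => rw [hrep]
        rw [map_sum]
        simp [hgdef]
      rw [← hm2, hm]
    set θ : {u : Fin n // u ∈ U} → b := fun u => ⟨g ↑u, hgUb ↑u u.2⟩ with hθdef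
    have hθinj : Function.Injective θ := by
      intro u u' h
      have h1 : g ↑u = g ↑u' := congrArg Subtype.val h
      obtain ⟨x, -, hx⟩ := Finset.mem_image.mp u.2
      obtain ⟨x', -, hx'⟩ := Finset.mem_image.mp u'.2
      apply Subtype.ext
      rw [← hx, ← hx']
      congr 1
      apply Subtype.ext
      rw [← hgpick x, ← hgpick x', hx, hx']
      exact h1
    have hliU : LinearIndependent F (fun u : {u : Fin n // u ∈ U} => g ↑u) := by
      have h2 : (fun u : {u : Fin n // u ∈ U} => g ↑u) = Subtype.val ∘ θ := rfl
      rw [h2]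
      exact hbli.comp θ hθinj
    have hcoef := Fintype.linearIndependent_iff.mp hliU (fun u => p ↑u)
    have hsum2 : ∑ u : {u : Fin n // u ∈ U}, p ↑u • g ↑u = 0 := by
      rw [Finset.sum_coe_sort U (fun u => p u • g u)]
      exact hq0
    have hz := hcoef hsum2
    funext j
    by_cases hj : j ∈ U
    · exact hz ⟨j, hj⟩
    · exact hp0 j hj
  have hv : ∀ i : Fin n, i ∉ U → ∃ x, x ∈ V ∧
      ∀ j, j ∉ U → x (Sum.inl j) = (if j = i then (1:F) else 0) := by
    intro i hi
    have hmem : (Pi.single i 1 : Fin n → F) ∈ P ⊔ SU := hSUtop ▸ Submodule.mem_top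
    obtain ⟨p, hp, c, hc, hpc⟩ := Submodule.mem_sup.mp hmem
    obtain ⟨x, hx, rfl⟩ := Submodule.mem_map.mp hp
    refine ⟨x, hx, ?_⟩
    intro j hj
    have h1 : π x j + c j = (Pi.single i 1 : Fin n → F) j := by
      have := congrFun hpc j
      rwa [Pi.add_apply] at this
    rw [hSU0 c hc j hj, add_zero] at h1
    have h2 : π x j = x (Sum.inl j) := rfl
    rw [← h2, h1, Pi.single_apply]
  set v : Fin n → ((Fin n ⊕ Fin m) → F) := fun i =>
    if h : i ∈ U then 0 else (hv i h).choose with hvdef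
  have hvV : ∀ i, v i ∈ V := by
    intro i; rw [hvdef]; dsimp only
    split
    · exact Submodule.zero_mem V
    · exact (hv i ‹_›).choose_spec.1
  have hvU : ∀ i ∈ U, v i = 0 := by
    intro i hi; rw [hvdef]; dsimp only; rw [dif_pos hi]
  have hvcoord : ∀ i, i ∉ U → ∀ j, j ∉ U →
      v i (Sum.inl j) = (if j = i then (1:F) else 0) := by
    intro i hi j hj
    rw [hvdef]; dsimp only; rw [dif_neg hi]
    exact (hv i hi).choose_spec.2 j hj
  set bW : Module.Basis (Fin δ) F W := Module.finBasisOfFinrankEq F W hfW with hbWdef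
  have hWspan : Submodule.span F
      (Set.range fun k : Fin δ => ((bW k : (Fin n ⊕ Fin m) → F))) = W := by
    have h5 := bW.span_eq
    have h5' : Submodule.map W.subtype (Submodule.span F (Set.range ⇑bW)) = W := by
      rw [h5, Submodule.map_subtype_top]
    rw [Submodule.map_span, ← Set.range_comp] at h5'
    exact h5'
  set E : Matrix (Fin δ) (Fin m) F :=
    Matrix.of fun k j => (bW k : (Fin n ⊕ Fin m) → F) (Sum.inr j) with hEdef
  set r : Matrix (Fin n) (Fin m) F := Matrix.of fun i j => v i (Sum.inr j) with hrdef
  set L : Matrix (Fin n) (Fin μ) F := Matrix.of fun i k =>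
    v i (Sum.inl (U.orderEmbOfFin hU k)) -
      (if i = U.orderEmbOfFin hU k then 1 else 0) with hLdef
  refine ⟨r, L, E, U, hU, ?_, ?_, ?_, ?_⟩
  · ext k j
    rw [Matrix.mul_apply]
    simp only [Matrix.transpose_apply, unitColumns, Matrix.of_apply, ite_mul, one_mul,
      zero_mul, Finset.sum_ite_eq', Finset.mem_univ, if_true, Matrix.zero_apply]
    rw [hrdef]
    dsimp only [Matrix.of_apply]
    rw [hvU _ (Finset.orderEmbOfFin_mem U hU k)]
    rfl
  · ext k k'
    rw [Matrix.mul_apply]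
    simp only [Matrix.transpose_apply, unitColumns, Matrix.of_apply, ite_mul, one_mul,
      zero_mul, Finset.sum_ite_eq', Finset.mem_univ, if_true]
    rw [hLdef]
    dsimp only [Matrix.of_apply]
    rw [hvU _ (Finset.orderEmbOfFin_mem U hU k)]
    simp only [Pi.zero_apply, zero_sub, Matrix.neg_apply, Matrix.one_apply]
    congr 1
    simp [(U.orderEmbOfFin hU).injective.eq_iff]
  · rw [Matrix.rank_eq_finrank_span_row, Matrix.row]
    have hr1 : Set.range (E : Matrix (Fin δ) (Fin m) F)
        = ψ '' Set.range (fun k : Fin δ => ((bW k : (Fin n ⊕ Fin m) → F))) := by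
      rw [← Set.range_comp]
      rfl
    rw [hr1, ← Submodule.map_span, hWspan]
    have h6 := LinearMap.finrank_range_add_finrank_ker (ψ.domRestrict W)
    rw [LinearMap.range_domRestrict] at h6
    have h7 : LinearMap.ker (ψ.domRestrict W) = ⊥ := by
      rw [LinearMap.ker_eq_bot']
      intro x hx
      have hx' : ψ (x : (Fin n ⊕ Fin m) → F) = 0 := hx
      apply Subtype.ext
      funext sj
      cases sj with
      | inl j =>
        have h8 : π ((x : (Fin n ⊕ Fin m) → F)) = 0 := LinearMap.mem_ker.mp x.2.2
        exact congrFun h8 j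
      | inr j => exact congrFun hx' j
    rw [h7] at h6
    simp only [finrank_bot, add_zero] at h6
    rw [h6, hfW]
  · have hrow1 : ∀ i, (Matrix.fromBlocks (1 + L * (unitColumns F U hU)ᵀ) r 0 E)
        (Sum.inl i) = v i := by
      intro i
      funext sj
      cases sj with
      | inr j =>
        show r i j = v i (Sum.inr j)
        rw [hrdef]; rfl
      | inl j =>
        show (1 + L * (unitColumns F U hU)ᵀ : Matrix (Fin n) (Fin n) F) i j = v i (Sum.inl j)
        rw [Matrix.add_apply, Matrix.one_apply, Matrix.mul_apply]
        have hterm : ∀ k, L i k * (unitColumns F U hU)ᵀ k j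
            = if j = U.orderEmbOfFin hU k then L i k else 0 := by
          intro k
          simp only [Matrix.transpose_apply, unitColumns, Matrix.of_apply, mul_ite, mul_one,
            mul_zero]
        rw [Finset.sum_congr rfl (fun k _ => hterm k)]
        by_cases hj : j ∈ U
        · obtain ⟨k0, hk0⟩ : ∃ k0, U.orderEmbOfFin hU k0 = j := by
            have h9 := Finset.range_orderEmbOfFin U hU
            have : j ∈ Set.range (U.orderEmbOfFin hU) := h9 ▸ hj
            exact this
          have hsum : (∑ k, if j = U.orderEmbOfFin hU k then L i k else 0) = L i k0 := by
            rw [Finset.sum_eq_single k0]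
            · rw [if_pos hk0.symm]
            · intro k _ hne
              rw [if_neg]
              intro h
              exact hne ((U.orderEmbOfFin hU).injective (hk0.trans h).symm)
            · intro h; exact absurd (Finset.mem_univ _) h
          rw [hsum, hLdef]
          dsimp only [Matrix.of_apply]
          rw [hk0]
          ring
        · have hsum : (∑ k, if j = U.orderEmbOfFin hU k then L i k else 0) = 0 := by
            apply Finset.sum_eq_zero
            intro k _
            rw [if_neg]
            intro h
            exact hj (h ▸ Finset.orderEmbOfFin_mem U hU k)
          rw [hsum, add_zero]
          by_cases hi : i ∈ U
          · rw [hvU i hi]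
            have hne : i ≠ j := fun h => hj (h ▸ hi)
            simp [hne]
          · rw [hvcoord i hi j hj]
            by_cases h : i = j
            · simp [h]
            · rw [if_neg h, if_neg (fun hh : j = i => h hh.symm)]
    have hrow2 : ∀ k, (Matrix.fromBlocks (1 + L * (unitColumns F U hU)ᵀ) r 0 E)
        (Sum.inr k) = (bW k : (Fin n ⊕ Fin m) → F) := by
      intro k
      funext sj
      cases sj with
      | inl j =>
        show (0 : Matrix (Fin δ) (Fin n) F) k j = (bW k : (Fin n ⊕ Fin m) → F) (Sum.inl j)
        have h8 : π ((bW k : (Fin n ⊕ Fin m) → F)) = 0 := LinearMap.mem_ker.mp (bW k).2.2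
        rw [Matrix.zero_apply]
        exact (congrFun h8 j).symm
      | inr j =>
        show E k j = (bW k : (Fin n ⊕ Fin m) → F) (Sum.inr j)
        rw [hEdef]; rfl
    apply le_antisymm
    · rw [rowSpace]
      apply Submodule.span_le.mpr
      rintro z ⟨i, rfl⟩
      dsimp only
      cases i with
      | inl i => rw [hrow1]; exact hvV i
      | inr k => rw [hrow2]; exact (bW k).2.1
    · intro x hx
      have hvS : ∀ i, v i ∈ rowSpace
          (Matrix.fromBlocks (1 + L * (unitColumns F U hU)ᵀ) r 0 E) := by
        intro i
        rw [← hrow1 i]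
        exact Submodule.subset_span ⟨Sum.inl i, rfl⟩
      have hWS : W ≤ rowSpace
          (Matrix.fromBlocks (1 + L * (unitColumns F U hU)ᵀ) r 0 E) := by
        rw [← hWspan]
        apply Submodule.span_le.mpr
        rintro z ⟨k, rfl⟩
        dsimp only
        rw [← hrow2 k]
        exact Submodule.subset_span ⟨Sum.inr k, rfl⟩
      set c : Fin n → F := fun i => x (Sum.inl i) with hcdef
      have hx'V : x - ∑ i ∈ Uᶜ, c i • v i ∈ V := by
        apply Submodule.sub_mem _ hx
        exact Submodule.sum_mem _ fun i _ => Submodule.smul_mem _ _ (hvV i)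
      have hπx' : π (x - ∑ i ∈ Uᶜ, c i • v i) = 0 := by
        apply hInd _ (Submodule.mem_map_of_mem hx'V)
        intro j hj
        show (x - ∑ i ∈ Uᶜ, c i • v i) (Sum.inl j) = 0
        rw [Pi.sub_apply, Finset.sum_apply]
        have hsum : ∑ i ∈ Uᶜ, (c i • v i) (Sum.inl j) = c j := by
          have hterm : ∀ i ∈ Uᶜ, (c i • v i) (Sum.inl j)
              = if j = i then c i else 0 := by
            intro i hi
            rw [Pi.smul_apply, smul_eq_mul, hvcoord i (Finset.mem_compl.mp hi) j hj]
            by_cases h : j = i <;> simp [h]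
          rw [Finset.sum_congr rfl hterm, Finset.sum_ite_eq]
          simp [Finset.mem_compl, hj]
        rw [hsum, hcdef]
        simp
      have hx'W : x - ∑ i ∈ Uᶜ, c i • v i ∈ W :=
        Submodule.mem_inf.mpr ⟨hx'V, LinearMap.mem_ker.mpr hπx'⟩
      have hdecomp : x = (x - ∑ i ∈ Uᶜ, c i • v i) + ∑ i ∈ Uᶜ, c i • v i :=
        (sub_add_cancel _ _).symm
      rw [hdecomp]
      exact Submodule.add_mem _ (hWS hx'W)
        (Submodule.sum_mem _ fun i _ => Submodule.smul_mem _ _ (hvS i))
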